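/- The inverse signed total domination number of the cycle C_n (n ≥ 3) equals 0 if n ≡ 0 (mod 4), -1 if n is odd, and -2 if n ≡ 2 (mod 4). -/

import Mathlib

open SimpleGraph Finset
open scoped Fin.CommRing Fin.NatCast Fin.IntCast

lemma istd_base_sum (m : ℕ) : ∑ i ∈ range (4*m), (if i % 4 ≤ 1 then (1:ℤ) else -1) = 0 := by
  induction m with
  | zero => simp
  | succ k ih =>
    have h : 4 * (k+1) = (4*k) + 1 + 1 + 1 + 1 := by ring
    rw [h, Finset.sum_range_succ, Finset.sum_range_succ, Finset.sum_range_succ,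
      Finset.sum_range_succ, ih]
    have h0 : (4*k) % 4 = 0 := by omega
    have h1 : (4*k+1) % 4 = 1 := by omega
    have h2 : (4*k+1+1) % 4 = 2 := by omega
    have h3 : (4*k+1+1+1) % 4 = 3 := by omega
    rw [h0, h1, h2, h3]; norm_num

/-- The inverse signed total domination number of the cycle `C_n` (`n ≥ 3`) equals
`0` if `n ≡ 0 (mod 4)`, `-1` if `n` is odd, and `-2` if `n ≡ 2 (mod 4)`. -/
theorem istdn_cycleGraph (n : ℕ) (hn : 3 ≤ n) :
    IsGreatest {w : ℤ | ∃ f : Fin n → ℤ,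
        (∀ v, f v = 1 ∨ f v = -1) ∧
        (∀ v : Fin n, ∑ u ∈ (SimpleGraph.cycleGraph n).neighborFinset v, f u ≤ 0) ∧
        w = ∑ v, f v}
      (if n % 4 = 0 then 0 else if n % 2 = 1 then -1 else -2) := by
  obtain ⟨m, rfl⟩ : ∃ m, n = m + 3 := ⟨n - 3, by omega⟩
  set n := m + 3 with hn3
  have hval2 : (2 : Fin n).val = 2 := rfl
  have hne : ∀ v : Fin n, v - 1 ≠ v + 1 := by
    intro v h
    rw [sub_eq_add_neg] at h
    have h2 : (-1 : Fin n) = 1 := add_left_cancel h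
    have h3 : (2 : Fin n) = 0 := by linear_combination -h2
    have h4 : ((2 : Fin n)).val = ((0 : Fin n)).val := by rw [h3]
    simp [hval2] at h4
    rw [Nat.mod_eq_of_lt (by omega)] at h4; omega
  have hsum : ∀ (f : Fin n → ℤ) (v : Fin n),
      ∑ u ∈ (SimpleGraph.cycleGraph n).neighborFinset v, f u = f (v - 1) + f (v + 1) := by
    intro f v
    have h := SimpleGraph.cycleGraph_neighborFinset (n := m+1) (v := v)
    rw [show (SimpleGraph.cycleGraph n).neighborFinset v = {v - 1, v + 1} from h,
      Finset.sum_pair (hne v)]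
  have hcond : ∀ f : Fin n → ℤ,
      (∀ v : Fin n, ∑ u ∈ (SimpleGraph.cycleGraph n).neighborFinset v, f u ≤ 0) ↔
      (∀ j : Fin n, f j + f (j + 2) ≤ 0) := by
    intro f
    constructor
    · intro h j
      have hh := h (j + 1)
      rw [hsum] at hh
      have e1 : j + 1 - 1 = j := by ring
      have e2 : j + 1 + 1 = j + 2 := by ring
      rwa [e1, e2] at hh
    · intro h v
      rw [hsum]
      have hh := h (v - 1)
      have e1 : v - 1 + 2 = v + 1 := by ring
      rwa [e1] at hh
  constructor
  · -- membership
    have h4 : n % 4 = 0 ∨ n % 4 = 1 ∨ n % 4 = 2 ∨ n % 4 = 3 := by omega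
    -- generic packaging
    have pack : ∀ (c : ℕ → Prop) (_ : DecidablePred c),
        (∀ a, a < n → c a → c ((a+2) % n) → False) →
        (∑ i ∈ range n, (if c i then (1:ℤ) else -1)) ∈ {w : ℤ | ∃ f : Fin n → ℤ,
          (∀ v, f v = 1 ∨ f v = -1) ∧
          (∀ v : Fin n, ∑ u ∈ (SimpleGraph.cycleGraph n).neighborFinset v, f u ≤ 0) ∧
          w = ∑ v, f v} := by
      intro c inst key
      refine ⟨fun v => if c v.val then (1:ℤ) else -1, fun v => by dsimp only; split_ifs <;> simp, ?_, ?_⟩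
      · rw [hcond]
        intro j
        have hj2 : (j + 2 : Fin n).val = (j.val + 2) % n := by
          rw [Fin.add_def, hval2]
        rw [hj2]
        split_ifs with h1 h2 <;> try norm_num
        exact absurd (key j.val j.isLt h1 h2) (by simp)
      · rw [Fin.sum_univ_eq_sum_range (fun i => if c i then (1:ℤ) else -1) n]
    rcases h4 with hr | hr | hr | hr
    · -- n % 4 = 0
      have hv : (if n % 4 = 0 then (0:ℤ) else if n % 2 = 1 then -1 else -2) = 0 := by
        simp [hr]
      rw [hv]
      have key : ∀ a, a < n → a % 4 ≤ 1 → ((a+2) % n) % 4 ≤ 1 → False := by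
        intro a ha h1 h2
        rcases Nat.lt_or_ge (a+2) n with h|h
        · rw [Nat.mod_eq_of_lt h] at h2; omega
        · have hb : (a+2) % n = a + 2 - n := by
            rw [Nat.mod_eq_sub_mod h, Nat.mod_eq_of_lt (by omega)]
          rw [hb] at h2; omega
      have := pack (fun a => a % 4 ≤ 1) (by infer_instance) key
      convert this using 1
      obtain ⟨k, hk⟩ : ∃ k, n = 4*k := ⟨n/4, by omega⟩
      rw [hk, istd_base_sum]
    · -- n % 4 = 1 : exclude 1
      have hv : (if n % 4 = 0 then (0:ℤ) else if n % 2 = 1 then -1 else -2) = -1 := by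
        have : n % 2 = 1 := by omega
        simp [hr, this]
      rw [hv]
      have key : ∀ a, a < n → (a % 4 ≤ 1 ∧ a ≠ 1) → (((a+2) % n) % 4 ≤ 1 ∧ (a+2) % n ≠ 1) → False := by
        intro a ha h1 h2
        rcases Nat.lt_or_ge (a+2) n with h|h
        · rw [Nat.mod_eq_of_lt h] at h2; omega
        · have hb : (a+2) % n = a + 2 - n := by
            rw [Nat.mod_eq_sub_mod h, Nat.mod_eq_of_lt (by omega)]
          rw [hb] at h2; omega
      have := pack (fun a => a % 4 ≤ 1 ∧ a ≠ 1) (by infer_instance) key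
      convert this using 1
      have hpt : ∀ i : ℕ, (if i % 4 ≤ 1 ∧ i ≠ 1 then (1:ℤ) else -1)
          = (if i % 4 ≤ 1 then (1:ℤ) else -1) - (if i = 1 then 2 else 0) := by
        intro i
        by_cases g1 : i % 4 ≤ 1 <;> by_cases g2 : i = 1 <;> simp [g1, g2] <;> omega
      rw [Finset.sum_congr rfl (fun i _ => hpt i), Finset.sum_sub_distrib]
      obtain ⟨k, hk⟩ : ∃ k, n = 4*k + 1 := ⟨n/4, by omega⟩
      rw [Finset.sum_ite_eq' (range n) 1 (fun _ => (2:ℤ)), if_pos (by rw [Finset.mem_range]; omega)]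
      rw [hk, Finset.sum_range_succ, istd_base_sum]
      norm_num [Nat.mul_mod_right]
    · -- n % 4 = 2 : exclude 0 and 1
      have hv : (if n % 4 = 0 then (0:ℤ) else if n % 2 = 1 then -1 else -2) = -2 := by
        have : n % 2 = 0 := by omega
        simp [hr, this]
      rw [hv]
      have key : ∀ a, a < n → (a % 4 ≤ 1 ∧ 2 ≤ a) → (((a+2) % n) % 4 ≤ 1 ∧ 2 ≤ (a+2) % n) → False := by
        intro a ha h1 h2
        rcases Nat.lt_or_ge (a+2) n with h|h
        · rw [Nat.mod_eq_of_lt h] at h2; omega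
        · have hb : (a+2) % n = a + 2 - n := by
            rw [Nat.mod_eq_sub_mod h, Nat.mod_eq_of_lt (by omega)]
          rw [hb] at h2; omega
      have := pack (fun a => a % 4 ≤ 1 ∧ 2 ≤ a) (by infer_instance) key
      convert this using 1
      have hpt : ∀ i : ℕ, (if i % 4 ≤ 1 ∧ 2 ≤ i then (1:ℤ) else -1)
          = (if i % 4 ≤ 1 then (1:ℤ) else -1) - (if i = 0 then 2 else 0) - (if i = 1 then 2 else 0) := by
        intro i
        by_cases g1 : i % 4 ≤ 1 <;> by_cases g2 : i = 0 <;> by_cases g3 : i = 1 <;>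
          simp [g1, g2, g3] <;> omega
      rw [Finset.sum_congr rfl (fun i _ => hpt i), Finset.sum_sub_distrib, Finset.sum_sub_distrib]
      obtain ⟨k, hk⟩ : ∃ k, n = 4*k + 1 + 1 := ⟨n/4, by omega⟩
      rw [Finset.sum_ite_eq' (range n) 0 (fun _ => (2:ℤ)), if_pos (by rw [Finset.mem_range]; omega)]
      rw [Finset.sum_ite_eq' (range n) 1 (fun _ => (2:ℤ)), if_pos (by rw [Finset.mem_range]; omega)]
      rw [hk, Finset.sum_range_succ, Finset.sum_range_succ, istd_base_sum]
      have e0 : (4*k) % 4 = 0 := by omega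
      have e1 : (4*k+1) % 4 = 1 := by omega
      rw [e0, e1]
      norm_num
    · -- n % 4 = 3 : exclude 0
      have hv : (if n % 4 = 0 then (0:ℤ) else if n % 2 = 1 then -1 else -2) = -1 := by
        have : n % 2 = 1 := by omega
        simp [hr, this]
      rw [hv]
      have key : ∀ a, a < n → (a % 4 ≤ 1 ∧ a ≠ 0) → (((a+2) % n) % 4 ≤ 1 ∧ (a+2) % n ≠ 0) → False := by
        intro a ha h1 h2
        rcases Nat.lt_or_ge (a+2) n with h|h
        · rw [Nat.mod_eq_of_lt h] at h2; omega
        · have hb : (a+2) % n = a + 2 - n := by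
            rw [Nat.mod_eq_sub_mod h, Nat.mod_eq_of_lt (by omega)]
          rw [hb] at h2; omega
      have := pack (fun a => a % 4 ≤ 1 ∧ a ≠ 0) (by infer_instance) key
      convert this using 1
      have hpt : ∀ i : ℕ, (if i % 4 ≤ 1 ∧ i ≠ 0 then (1:ℤ) else -1)
          = (if i % 4 ≤ 1 then (1:ℤ) else -1) - (if i = 0 then 2 else 0) := by
        intro i
        by_cases g1 : i % 4 ≤ 1 <;> by_cases g2 : i = 0 <;> simp [g1, g2] <;> omega
      rw [Finset.sum_congr rfl (fun i _ => hpt i), Finset.sum_sub_distrib]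
      obtain ⟨k, hk⟩ : ∃ k, n = 4*k + 1 + 1 + 1 := ⟨n/4, by omega⟩
      rw [Finset.sum_ite_eq' (range n) 0 (fun _ => (2:ℤ)), if_pos (by rw [Finset.mem_range]; omega)]
      rw [hk, Finset.sum_range_succ, Finset.sum_range_succ, Finset.sum_range_succ, istd_base_sum]
      have e0 : (4*k) % 4 = 0 := by omega
      have e1 : (4*k+1) % 4 = 1 := by omega
      have e2 : (4*k+1+1) % 4 = 2 := by omega
      rw [e0, e1, e2]
      norm_num
  · -- upper bound
    rintro w ⟨f, hf1, hf2, rfl⟩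
    rw [hcond] at hf2
    have hEq : ∑ v : Fin n, f (v + 2) = ∑ v : Fin n, f v :=
      Fintype.sum_equiv (Equiv.addRight (2 : Fin n)) _ _ (fun v => rfl)
    have hW : 2 * ∑ v, f v ≤ 0 := by
      have h := Finset.sum_nonpos (s := (univ : Finset (Fin n))) (fun j _ => hf2 j)
      rw [Finset.sum_add_distrib, hEq] at h
      linarith
    have hW0 : ∑ v, f v ≤ 0 := by linarith
    have hpar : (2:ℤ) ∣ (∑ v, f v - n) := by
      have e : (∑ v, f v) - (n:ℤ) = ∑ v : Fin n, (f v - 1) := by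
        rw [Finset.sum_sub_distrib]
        simp [Finset.card_univ]
      rw [e]
      exact Finset.dvd_sum fun v _ => by rcases hf1 v with h|h <;> simp [h]
    split_ifs with h40 h21
    · exact hW0
    · omega
    · -- n % 4 = 2
      have hz : ∑ v, f v ≠ 0 := by
        intro h0
        have hs : ∑ j : Fin n, (f j + f (j+2)) = 0 := by
          rw [Finset.sum_add_distrib, hEq, h0]; ring
        have hall : ∀ j : Fin n, f j + f (j+2) = 0 := fun j =>
          (Finset.sum_eq_zero_iff_of_nonpos (fun j _ => hf2 j)).mp hs j (mem_univ j)
        have hstep : ∀ v : Fin n, f (v + 2) = -f v := fun v => by linarith [hall v]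
        have hiter : ∀ (k : ℕ) (v : Fin n), f (v + ((2*k : ℕ) : Fin n)) = (-1)^k * f v := by
          intro k
          induction k with
          | zero => intro v; simp
          | succ t ih =>
            intro v
            have e : ((2*(t+1) : ℕ) : Fin n) = ((2*t : ℕ) : Fin n) + 2 := by rw [Nat.mul_succ, Nat.cast_add]; rfl
            rw [e, ← add_assoc, hstep, ih]
            ring
        have hodd : Odd (n/2) := by
          rw [Nat.odd_iff]; omega
        have hfin := hiter (n/2) 0
        rw [show 2 * (n/2) = n from by omega, Fin.natCast_self, add_zero,
          hodd.neg_one_pow] at hfin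
        rcases hf1 0 with h|h <;> rw [h] at hfin <;> norm_num at hfin
      omega
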